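/- If a graph G contains an X-spider of order k with body v, then in the line graph of the graph G' obtained from G by consolidating X to a single vertex x, there exist k pairwise vertex-disjoint paths from the clique δ(x) to the set of edges incident to v. -/

import Mathlib

/-- A finite multigraph without loops: a vertex type, an edge type, and an
endpoint map assigning to each edge an unordered pair of distinct vertices. -/
structure Multigraph where
  V : Type
  E : Type
  [finV : Finite V]
  [finE : Finite E]
  ends : E → Sym2 V
  no_loops : ∀ e, ¬ (ends e).IsDiag

attribute [instance] Multigraph.finV Multigraph.finE

namespace Multigraph

variable (G : Multigraph)

/-- The set of edges with exactly one endpoint in `X`. -/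
def edgeBoundary (X : Set G.V) : Set G.E :=
  {e | ∃ u v, G.ends e = s(u, v) ∧ u ∈ X ∧ v ∉ X}

/-- The degree of a vertex: the number of edges incident with it. -/
noncomputable def degree (v : G.V) : ℕ := {e | v ∈ G.ends e}.ncard

/-- Two vertices are adjacent if some edge joins them. -/
def Adj (u v : G.V) : Prop := ∃ e, G.ends e = s(u, v)

/-- Walks in a multigraph. -/
inductive Walk : G.V → G.V → Type
  | nil (v : G.V) : Walk v v
  | cons {u v w : G.V} (e : G.E) (h : G.ends e = s(u, v)) (p : Walk v w) : Walk u w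

variable {G}

/-- The list of edges of a walk. -/
def Walk.edges : ∀ {u v : G.V}, G.Walk u v → List G.E
  | _, _, .nil _ => []
  | _, _, .cons e _ p => e :: p.edges

/-- The list of vertices of a walk, from the first to the last. -/
def Walk.support : ∀ {u v : G.V}, G.Walk u v → List G.V
  | _, v, .nil _ => [v]
  | u, _, .cons _ _ p => u :: p.support

/-- A walk is a path if it repeats no vertex. -/
def Walk.IsPath {u v : G.V} (p : G.Walk u v) : Prop := p.support.Nodup

/-- The internal vertices of a walk (all vertices except the two endpoints). -/
def Walk.internals {u v : G.V} (p : G.Walk u v) : List G.V := p.support.tail.dropLast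

/-- The walk avoids the edge set `F`. -/
def Walk.avoids {u v : G.V} (p : G.Walk u v) (F : Set G.E) : Prop := ∀ e ∈ p.edges, e ∉ F

variable (G)

/-- Any two vertices can be joined by a walk avoiding the edge set `F`. -/
def ConnectedAvoiding (F : Set G.E) : Prop :=
  ∀ u v : G.V, ∃ p : G.Walk u v, p.avoids F

/-- A multigraph is connected if any two vertices are joined by a walk. -/
def Connected : Prop := G.ConnectedAvoiding ∅

/-- A multigraph is `k`-edge-connected if it has at least two vertices and
deleting any fewer than `k` edges leaves it connected. -/
def EdgeConnected (k : ℕ) : Prop :=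
  Nontrivial G.V ∧ ∀ F : Set G.E, F.ncard < k → G.ConnectedAvoiding F

end Multigraph

open Multigraph

/-- The data of a (weak) immersion of `H` in `G`: an injection of the vertices and
pairwise edge-disjoint composite paths, one for each edge of `H`. -/
structure ImmersionData (H G : Multigraph) where
  π : H.V → G.V
  inj : Function.Injective π
  pathEnds : H.E → G.V × G.V
  path : ∀ f : H.E, G.Walk (pathEnds f).1 (pathEnds f).2
  ends_eq : ∀ f : H.E, Sym2.map π (H.ends f) = s((pathEnds f).1, (pathEnds f).2)
  isPath : ∀ f, (path f).IsPath
  edge_disj : ∀ f f', f ≠ f' → ∀ e, e ∈ (path f).edges → e ∉ (path f').edges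

/-- `G` contains `H` as a (weak) immersion. -/
def Immersion (H G : Multigraph) : Prop := Nonempty (ImmersionData H G)

/-- An immersion is strong if no branch vertex is an internal vertex of a composite path. -/
def ImmersionData.Strong {H G : Multigraph} (I : ImmersionData H G) : Prop :=
  ∀ f : H.E, ∀ v : H.V, I.π v ∉ (I.path f).internals

/-- `G` contains `H` as a strong immersion. -/
def StrongImmersion (H G : Multigraph) : Prop := ∃ I : ImmersionData H G, I.Strong

/-- `G` contains `H` as a topological minor: an immersion whose composite paths are
internally vertex-disjoint and avoid the branch vertices internally. -/
def TopologicalMinor (H G : Multigraph) : Prop :=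
  ∃ I : ImmersionData H G,
    (∀ f v, I.π v ∉ (I.path f).internals) ∧
    (∀ f f', f ≠ f' → ∀ w, w ∈ (I.path f).internals → w ∉ (I.path f').internals)

/-- The complete multigraph `K t`: one edge for every unordered pair of distinct vertices. -/
def cliqueGraph (t : ℕ) : Multigraph where
  V := Fin t
  E := {p : Sym2 (Fin t) // ¬ p.IsDiag}
  ends := Subtype.val
  no_loops := fun e => e.2

/-- The multigraph `S_{k,n}`: vertices `x_1, …, x_n` (`some i`) and `y` (`none`), with
exactly `k` parallel edges between each `x_i` and `y`. -/
def starMulti (k n : ℕ) : Multigraph where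
  V := Option (Fin n)
  E := Fin n × Fin k
  ends := fun p => s(some p.1, none)
  no_loops := fun e h => by simp [Sym2.mk_isDiag_iff] at h

/-- The multigraph `P_{k,n}`: a path on `n` vertices with each edge replaced by `k`
parallel edges. -/
def pathMulti (k n : ℕ) : Multigraph where
  V := Fin n
  E := Fin (n - 1) × Fin k
  ends := fun p => s(⟨p.1.1, by have := p.1.2; omega⟩, ⟨p.1.1 + 1, by have := p.1.2; omega⟩)
  no_loops := fun e h => by simp [Sym2.mk_isDiag_iff, Fin.ext_iff] at h

namespace Multigraph

/-- A subgraph of a multigraph, given by a set of vertices and a set of edges with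
both endpoints among those vertices. -/
structure Sub (G : Multigraph) where
  verts : Set G.V
  edgeSet : Set G.E
  closed : ∀ e ∈ edgeSet, ∀ v ∈ G.ends e, v ∈ verts

/-- `(A, B)` is a separation: `A` and `B` are edge-disjoint subgraphs whose union is `G`. -/
def IsSeparation {G : Multigraph} (A B : G.Sub) : Prop :=
  A.verts ∪ B.verts = Set.univ ∧ A.edgeSet ∪ B.edgeSet = Set.univ ∧ A.edgeSet ∩ B.edgeSet = ∅

/-- The order of a separation `(A, B)`. -/
noncomputable def sepOrder {G : Multigraph} (A B : G.Sub) : ℕ := (A.verts ∩ B.verts).ncard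

/-- `𝒯` is a tangle of order `Θ` in `G`. -/
def IsTangle (G : Multigraph) (𝒯 : Set (G.Sub × G.Sub)) (Θ : ℕ) : Prop :=
  (∀ p ∈ 𝒯, IsSeparation p.1 p.2 ∧ sepOrder p.1 p.2 < Θ) ∧
  (∀ A B : G.Sub, IsSeparation A B → sepOrder A B < Θ → (A, B) ∈ 𝒯 ∨ (B, A) ∈ 𝒯) ∧
  (∀ p₁ ∈ 𝒯, ∀ p₂ ∈ 𝒯, ∀ p₃ ∈ 𝒯,
    ¬ (p₁.1.verts ∪ p₂.1.verts ∪ p₃.1.verts = Set.univ ∧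
       p₁.1.edgeSet ∪ p₂.1.edgeSet ∪ p₃.1.edgeSet = Set.univ)) ∧
  (∀ p ∈ 𝒯, p.1.verts ≠ Set.univ)

/-- The line graph of a multigraph: vertices are the edges of `G`, with an edge of the
line graph for each unordered pair of distinct edges of `G` sharing an endpoint. -/
def lineGraph (G : Multigraph) : Multigraph where
  V := G.E
  E := {p : Sym2 G.E // ¬ p.IsDiag ∧ ∃ e f, p = s(e, f) ∧ ∃ v, v ∈ G.ends e ∧ v ∈ G.ends f}
  ends := Subtype.val
  no_loops := fun e => e.2.1

/-- `G'` (with projection `q` and new vertex `x`) is obtained from `G` by consolidating the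
vertex set `X`: delete all edges with both ends in `X` and identify `X` to the vertex `x`. -/
def IsConsolidation (G : Multigraph) (X : Set G.V) (G' : Multigraph)
    (q : G.V → G'.V) (x : G'.V) : Prop :=
  Function.Surjective q ∧ (∀ a ∈ X, q a = x) ∧ (∀ a ∉ X, q a ≠ x) ∧
  (∀ a b, a ∉ X → b ∉ X → q a = q b → a = b) ∧
  ∃ φ : {e : G.E // ∃ w ∈ G.ends e, w ∉ X} ≃ G'.E,
    ∀ e, G'.ends (φ e) = Sym2.map q (G.ends e.1)

/-- An `X`-spider of order `k` with body `v`: `k` pairwise edge-disjoint paths from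
`v ∉ X` to `X`, none of them having an internal vertex in `X`. -/
def HasSpiderWithBody (G : Multigraph) (X : Set G.V) (k : ℕ) (v : G.V) : Prop :=
  v ∉ X ∧ ∃ (tgt : Fin k → G.V) (P : ∀ i, G.Walk v (tgt i)),
    (∀ i, tgt i ∈ X) ∧ (∀ i, (P i).IsPath) ∧
    (∀ i, ∀ w ∈ (P i).internals, w ∉ X) ∧
    (∀ i j, i ≠ j → ∀ e ∈ (P i).edges, e ∉ (P j).edges)

/-- `G` contains an `X`-spider of order `k`. -/
def HasXSpider (G : Multigraph) (X : Set G.V) (k : ℕ) : Prop :=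
  ∃ v, HasSpiderWithBody G X k v

/-- A model of the complete graph `K t` in `G`: `t` pairwise disjoint nonempty connected
branch sets with an edge of `G` between any two of them. -/
def IsCliqueModel (G : Multigraph) (t : ℕ) (X : Fin t → Set G.V) : Prop :=
  (∀ i, (X i).Nonempty) ∧
  (∀ i j, i ≠ j → Disjoint (X i) (X j)) ∧
  (∀ i, ∀ u ∈ X i, ∀ v ∈ X i, ∃ p : G.Walk u v, ∀ w ∈ p.support, w ∈ X i) ∧
  (∀ i j, i ≠ j → ∃ e, ∃ a ∈ X i, ∃ b ∈ X j, G.ends e = s(a, b))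

/-- The canonical separation `(A, B)` of the line graph of `G` associated to a vertex
set `U ⊆ V(G)`. -/
def IsCanonicalSeparation (G : Multigraph) (U : Set G.V) (A B : G.lineGraph.Sub) : Prop :=
  A.verts = {e : G.E | ∃ w ∈ G.ends e, w ∈ U} ∧
  A.edgeSet = {p : G.lineGraph.E | ∀ q ∈ G.lineGraph.ends p, ∃ w ∈ G.ends q, w ∈ U} ∧
  B.verts = {e : G.E | ∃ w ∈ G.ends e, w ∉ U} ∧
  B.edgeSet = {p : G.lineGraph.E | (∀ q ∈ G.lineGraph.ends p, ∃ w ∈ G.ends q, w ∉ U) ∧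
    ¬ (∀ q ∈ G.lineGraph.ends p, q ∈ G.edgeBoundary U)}

/-- A `k`-star with center `u`: a set of `k` edges all incident with `u`. -/
def IsKStarWithCenter (G : Multigraph) (F : Set G.E) (k : ℕ) (u : G.V) : Prop :=
  F.ncard = k ∧ ∀ e ∈ F, u ∈ G.ends e

/-- A set `F` of vertices of the line graph of `G` is free with respect to a tangle `𝒯`
in the line graph if no separation in `𝒯` of order less than `|F|` has `F` on its small side. -/
def FreeInTangle (G : Multigraph) (𝒯 : Set (G.lineGraph.Sub × G.lineGraph.Sub))
    (F : Set G.E) : Prop :=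
  ¬ ∃ p ∈ 𝒯, sepOrder p.1 p.2 < F.ncard ∧ F ⊆ p.1.verts

end Multigraph

namespace Multigraph

variable {G : Multigraph}

/-- Concatenate an edge at the end of a walk. -/
def Walk.concat : ∀ {u v w : G.V}, G.Walk u v → ∀ (e : G.E), G.ends e = s(v, w) → G.Walk u w
  | _, _, w, .nil _, e, h => .cons e h (.nil w)
  | _, _, _, .cons e' h' p, e, h => .cons e' h' (p.concat e h)

/-- Reverse of a walk. -/
def Walk.reverse : ∀ {u v : G.V}, G.Walk u v → G.Walk v u
  | _, _, .nil v => .nil v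
  | _, _, .cons e h p => p.reverse.concat e (by rw [h, Sym2.eq_swap])

theorem Walk.support_concat : ∀ {u v w : G.V} (p : G.Walk u v) (e : G.E)
    (h : G.ends e = s(v, w)), (p.concat e h).support = p.support ++ [w]
  | _, _, _, .nil _, e, h => rfl
  | _, _, _, .cons e' h' p, e, h => by
      simp [Walk.concat, Walk.support, Walk.support_concat p e h]

theorem Walk.support_reverse : ∀ {u v : G.V} (p : G.Walk u v),
    p.reverse.support = p.support.reverse
  | _, _, .nil v => rfl
  | _, _, .cons e h p => by
      simp [Walk.reverse, Walk.support, Walk.support_concat, Walk.support_reverse p]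

theorem Walk.support_ne_nil : ∀ {u v : G.V} (p : G.Walk u v), p.support ≠ []
  | _, _, .nil v => by simp [Walk.support]
  | _, _, .cons e h p => by simp [Walk.support]

theorem Walk.head_support : ∀ {u v : G.V} (p : G.Walk u v), ∃ t, p.support = u :: t
  | _, _, .nil v => ⟨[], rfl⟩
  | _, _, .cons e h p => ⟨_, rfl⟩

theorem Walk.mem_support_of_mem_edges : ∀ {u v : G.V} (p : G.Walk u v), ∀ f ∈ p.edges,
    ∀ z ∈ G.ends f, z ∈ p.support
  | _, _, .nil v => by simp [Walk.edges]
  | u, w, .cons e h p => by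
      intro f hf z hz
      rcases List.mem_cons.1 hf with rfl | hf
      · rw [h] at hz
        rcases Sym2.mem_iff.1 hz with rfl | rfl
        · exact List.mem_cons_self
        · obtain ⟨t, ht⟩ := p.head_support
          rw [Walk.support, ht]
          exact List.mem_cons_of_mem _ (List.mem_cons_self)
      · exact List.mem_cons_of_mem _ (p.mem_support_of_mem_edges f hf z hz)

theorem Walk.edges_nodup : ∀ {u v : G.V} (p : G.Walk u v), p.support.Nodup → p.edges.Nodup
  | _, _, .nil v => fun _ => List.nodup_nil
  | u, w, .cons e h p => by
      intro hnd
      rw [Walk.support, List.nodup_cons] at hnd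
      rw [Walk.edges, List.nodup_cons]
      refine ⟨fun he => hnd.1 ?_, p.edges_nodup hnd.2⟩
      exact p.mem_support_of_mem_edges e he u (by rw [h]; exact Sym2.mem_mk_left _ _)

/-- Main construction: a walk in `G` whose vertices (except possibly the last)
avoid `X` induces a path in the line graph of the consolidation `G'`. -/
theorem build_lineGraph_walk (G G' : Multigraph) (X : Set G.V) (q : G.V → G'.V)
    (ψ : G.E → G'.E)
    (hψ : ∀ e, (∃ z ∈ G.ends e, z ∉ X) → G'.ends (ψ e) = Sym2.map q (G.ends e))
    (hψinj : ∀ e f, (∃ z ∈ G.ends e, z ∉ X) → (∃ z ∈ G.ends f, z ∉ X) → ψ e = ψ f → e = f) :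
    ∀ {u w : G.V} (W : G.Walk u w) (u₀ : G.V) (e : G.E), G.ends e = s(u₀, u) →
    (u₀ :: W.support).Nodup →
    (∀ t ∈ (u₀ :: W.support).dropLast, t ∉ X) →
    ∃ (B : G'.E) (Q : G'.lineGraph.Walk (ψ e) B),
      Q.support = (e :: W.edges).map ψ ∧
      q w ∈ G'.ends B ∧
      (∀ f ∈ e :: W.edges, ∃ z ∈ G.ends f, z ∉ X) := by
  intro u w W
  induction W with
  | nil w =>
    intro u₀ e he hnd hdrop
    have hu₀ : u₀ ∉ X := hdrop u₀ (by simp [Walk.support])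
    have hprop : ∃ z ∈ G.ends e, z ∉ X := ⟨u₀, by rw [he]; exact Sym2.mem_mk_left _ _, hu₀⟩
    refine ⟨ψ e, .nil _, by simp [Walk.support, Walk.edges]; rfl, ?_, ?_⟩
    · rw [hψ e hprop, he, Sym2.map_pair_eq]
      exact Sym2.mem_mk_right _ _
    · intro f hf
      rcases List.mem_cons.1 hf with rfl | hf
      · exact hprop
      · simp [Walk.edges] at hf
  | @cons u u' w e' h' p ih =>
    intro u₀ e he hnd hdrop
    have hpne : p.support ≠ [] := p.support_ne_nil
    have hsupcons : (Walk.cons e' h' p).support = u :: p.support := rfl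
    have hdrop' : ∀ t ∈ (u :: p.support).dropLast, t ∉ X := by
      intro t ht
      refine hdrop t ?_
      rw [hsupcons, List.dropLast_cons_of_ne_nil (by simp [hpne])]
      exact List.mem_cons_of_mem _ ht
    have hnd' : (u :: p.support).Nodup := by
      rw [hsupcons, List.nodup_cons] at hnd; exact hnd.2
    obtain ⟨B, Q', hQsup, hqw, hprops⟩ := ih u e' h' hnd' hdrop'
    -- properties of e and e'
    have hu₀ : u₀ ∉ X := by
      refine hdrop u₀ ?_
      rw [hsupcons, List.dropLast_cons_of_ne_nil (by simp [hpne])]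
      exact List.mem_cons_self
    have hu : u ∉ X := by
      refine hdrop u ?_
      rw [hsupcons, List.dropLast_cons_of_ne_nil (by simp [hpne]),
        List.dropLast_cons_of_ne_nil hpne]
      exact List.mem_cons_of_mem _ (List.mem_cons_self)
    have hprope : ∃ z ∈ G.ends e, z ∉ X := ⟨u₀, by rw [he]; exact Sym2.mem_mk_left _ _, hu₀⟩
    have hprope' : ∃ z ∈ G.ends e', z ∉ X := ⟨u, by rw [h']; exact Sym2.mem_mk_left _ _, hu⟩
    have hne : ψ e ≠ ψ e' := by
      intro hψeq
      have hee' : e = e' := hψinj e e' hprope hprope' hψeq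
      have : s(u₀, u) = s(u, u') := by rw [← he, ← h', hee']
      rcases Sym2.eq_iff.1 this with ⟨h1, _⟩ | ⟨h1, _⟩
      · exact G.no_loops e (by rw [he, h1]; exact Sym2.mk_isDiag_iff.2 rfl)
      · obtain ⟨t, ht⟩ := p.head_support
        rw [hsupcons, List.nodup_cons] at hnd
        exact hnd.1 (by rw [ht, h1]; exact List.mem_cons_of_mem _ (List.mem_cons_self))
    have hmeme : q u ∈ G'.ends (ψ e) := by
      rw [hψ e hprope, he, Sym2.map_pair_eq]; exact Sym2.mem_mk_right _ _
    have hmeme' : q u ∈ G'.ends (ψ e') := by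
      rw [hψ e' hprope', h', Sym2.map_pair_eq]; exact Sym2.mem_mk_left _ _
    refine ⟨B, .cons (G := G'.lineGraph)
      ⟨s(ψ e, ψ e'), fun hd => hne (Sym2.mk_isDiag_iff.1 hd),
        ψ e, ψ e', rfl, q u, hmeme, hmeme'⟩ rfl Q', ?_, hqw, ?_⟩
    · exact congrArg (List.cons (ψ e)) hQsup
    · intro f hf
      rcases List.mem_cons.1 hf with rfl | hf
      · exact hprope
      · exact hprops f hf

theorem Walk.exists_cons_of_ne {u w : G.V} (p : G.Walk u w) (h : u ≠ w) :
    ∃ (v' : G.V) (e : G.E) (he : G.ends e = s(u, v')) (p' : G.Walk v' w),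
      p = Walk.cons e he p' := by
  cases p with
  | nil => exact absurd rfl h
  | cons e he p' => exact ⟨_, e, he, p', rfl⟩

end Multigraph


open Multigraph in
/-- an `X`-spider of order `k` with body `v` yields `k` pairwise
vertex-disjoint paths in the line graph of the consolidation, from the clique `δ(x)`
to the edges incident to (the image of) `v`. -/
theorem spider_gives_disjoint_paths_in_lineGraph (G : Multigraph) (X : Set G.V) (k : ℕ)
    (v : G.V) (hspider : HasSpiderWithBody G X k v)
    (G' : Multigraph) (q : G.V → G'.V) (x : G'.V)
    (hcons : IsConsolidation G X G' q x) :
    ∃ (a b : Fin k → G'.E) (P : ∀ i, G'.lineGraph.Walk (a i) (b i)),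
      (∀ i, x ∈ G'.ends (a i)) ∧ (∀ i, q v ∈ G'.ends (b i)) ∧
      (∀ i, (P i).IsPath) ∧
      (∀ i j, i ≠ j → ∀ w ∈ (P i).support, w ∉ (P j).support) := by
  obtain ⟨hvX, tgt, P, htgt, hpath, hint, hdisj⟩ := hspider
  obtain ⟨hsurj, hqX, hqnX, hqinj, φ, hφ⟩ := hcons
  rcases Nat.eq_zero_or_pos k with hk | hk
  · subst hk
    exact ⟨Fin.elim0, Fin.elim0, fun i => i.elim0, fun i => i.elim0, fun i => i.elim0,
      fun i => i.elim0, fun i => i.elim0⟩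
  classical
  -- G'.E is nonempty
  have hne0 : v ≠ tgt ⟨0, hk⟩ := fun h => hvX (h ▸ htgt ⟨0, hk⟩)
  obtain ⟨v₁, e₀, he₀, p₀, _⟩ := (P ⟨0, hk⟩).exists_cons_of_ne hne0
  haveI hGE : Nonempty G'.E :=
    ⟨φ ⟨e₀, v, by rw [he₀]; exact Sym2.mem_mk_left _ _, hvX⟩⟩
  set ψ : G.E → G'.E := fun e =>
    if h : ∃ z ∈ G.ends e, z ∉ X then φ ⟨e, h⟩ else Classical.arbitrary G'.E with hψdef
  have hψ : ∀ e, (∃ z ∈ G.ends e, z ∉ X) → G'.ends (ψ e) = Sym2.map q (G.ends e) := by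
    intro e h
    rw [hψdef]
    simp only [dif_pos h]
    exact hφ ⟨e, h⟩
  have hψinj : ∀ e f, (∃ z ∈ G.ends e, z ∉ X) → (∃ z ∈ G.ends f, z ∉ X) →
      ψ e = ψ f → e = f := by
    intro e f he hf heq
    rw [hψdef] at heq
    simp only [dif_pos he, dif_pos hf] at heq
    exact congrArg Subtype.val (φ.injective heq)
  have key : ∀ i : Fin k, ∃ (A B : G'.E) (Q : G'.lineGraph.Walk A B),
      x ∈ G'.ends A ∧ q v ∈ G'.ends B ∧ Q.IsPath ∧
      ∀ s ∈ Q.support, ∃ f ∈ (P i).edges, (∃ z ∈ G.ends f, z ∉ X) ∧ s = ψ f := by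
    intro i
    have hnei : v ≠ tgt i := fun h => hvX (h ▸ htgt i)
    obtain ⟨v₁, e, he, p', hPeq⟩ := (P i).exists_cons_of_ne hnei
    have hsup : (P i).support = v :: p'.support := by rw [hPeq]; rfl
    have hedg : (P i).edges = e :: p'.edges := by rw [hPeq]; rfl
    have hnodup : (v :: p'.support).Nodup := by
      have := hpath i; rw [Walk.IsPath, hsup] at this; exact this
    have hpne : p'.support ≠ [] := p'.support_ne_nil
    have hdropl : (v :: p'.support).dropLast = v :: p'.support.dropLast :=
      List.dropLast_cons_of_ne_nil hpne
    have hdrop : ∀ t ∈ (v :: p'.support).dropLast, t ∉ X := by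
      intro t ht
      rw [hdropl] at ht
      rcases List.mem_cons.1 ht with rfl | ht
      · exact hvX
      · refine hint i t ?_
        rw [Walk.internals, hsup]
        exact ht
    obtain ⟨B, Q, hQsup, hqw, hprops⟩ :=
      build_lineGraph_walk G G' X q ψ hψ hψinj p' v e he hnodup hdrop
    have hBx : x ∈ G'.ends B := by rwa [hqX _ (htgt i)] at hqw
    have hpropE : ∃ z ∈ G.ends e, z ∉ X :=
      ⟨v, by rw [he]; exact Sym2.mem_mk_left _ _, hvX⟩
    have hqv : q v ∈ G'.ends (ψ e) := by
      rw [hψ e hpropE, he, Sym2.map_pair_eq]; exact Sym2.mem_mk_left _ _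
    refine ⟨B, ψ e, Q.reverse, hBx, hqv, ?_, ?_⟩
    · show List.Nodup _
      refine (congrArg List.Nodup (Walk.support_reverse Q)).mpr ?_
      rw [List.nodup_reverse, hQsup]
      refine List.Nodup.map_on ?_ ?_
      · intro a ha b hb hab
        exact hψinj a b (hprops a ha) (hprops b hb) hab
      · rw [← hedg]
        exact (P i).edges_nodup (hpath i)
    · intro s hs
      have hs := List.mem_reverse.1 ((congrArg (fun l => s ∈ l) (Walk.support_reverse Q)).mp hs)
      rw [hQsup] at hs
      have hs := List.mem_map.1 (show (s : G'.E) ∈ List.map ψ (e :: p'.edges) from hs)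
      obtain ⟨f, hf, rfl⟩ := hs
      exact ⟨f, by rw [hedg]; exact hf, hprops f hf, rfl⟩
  choose a b Pw hA hB hIsP hmem using key
  refine ⟨a, b, Pw, hA, hB, hIsP, ?_⟩
  intro i j hij s hs hs'
  obtain ⟨f, hf, hfp, rfl⟩ := hmem i s hs
  obtain ⟨f', hf', hfp', heq⟩ := hmem j _ hs'
  have : f = f' := hψinj f f' hfp hfp' heq
  exact hdisj i j hij f hf (this ▸ hf')
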